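/- arXiv:2002.09187 — 2 statements merged into one kernel-verified Lean document; each statement's English description precedes it below -/
import Mathlib

section
/- Let U ⊆ ℝ^d be open, let q : U → ℂ be continuous, and let ξ ∈ ℂ^d satisfy ξ ⬝ ξ = 0. Let ψ : U → ℂ be twice continuously differentiable and define u(x) := exp(½ ξ·x) (1 + ψ(x)). Then u satisfies the Schrödinger equation Δu + q u = 0 at every point of U if and only if ψ satisfies Δψ + ξ·∇ψ + q ψ = −q at every point of U. -/
open Complex

/-- The partial derivative `∂f/∂x_k` of `f : ℝ^d → ℂ`. -/
noncomputable def partialDeriv' (d : ℕ) (k : Fin d)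
    (f : EuclideanSpace ℝ (Fin d) → ℂ) (x : EuclideanSpace ℝ (Fin d)) : ℂ :=
  fderiv ℝ f x (EuclideanSpace.single k (1 : ℝ))

/-- The Laplacian `Δf = ∑ₖ ∂²f/∂x_k²` of `f : ℝ^d → ℂ`. -/
noncomputable def laplacian' (d : ℕ) (f : EuclideanSpace ℝ (Fin d) → ℂ)
    (x : EuclideanSpace ℝ (Fin d)) : ℂ :=
  ∑ k, partialDeriv' d k (fun y => partialDeriv' d k f y) x

lemma euclid_proj_apply (d : ℕ) (k : Fin d) (y : EuclideanSpace ℝ (Fin d)) :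
    EuclideanSpace.proj k y = y k := rfl

/-- Let `q` be continuous on an open `U ⊆ ℝ^d`, `ξ ∈ ℂ^d` with `ξ⬝ξ = 0`, `ψ` `C²` on `U`,
and `u(x) = exp(½ ξ·x)(1 + ψ(x))`. Then `Δu + q u = 0` on `U` iff
`Δψ + ξ·∇ψ + q ψ = −q` on `U`. -/
theorem cgo_ansatz_iff (d : ℕ) (U : Set (EuclideanSpace ℝ (Fin d))) (hU : IsOpen U)
    (q : EuclideanSpace ℝ (Fin d) → ℂ) (hq : ContinuousOn q U)
    (ξ : Fin d → ℂ) (hξ : (∑ k, ξ k * ξ k) = 0)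
    (ψ : EuclideanSpace ℝ (Fin d) → ℂ) (hψ : ContDiffOn ℝ 2 ψ U)
    (u : EuclideanSpace ℝ (Fin d) → ℂ)
    (hu : ∀ x, u x = Complex.exp ((1 / 2 : ℂ) * ∑ k, ξ k * (x k : ℂ)) * (1 + ψ x)) :
    (∀ x ∈ U, laplacian' d u x + q x * u x = 0) ↔
    (∀ x ∈ U, laplacian' d ψ x + (∑ k, ξ k * partialDeriv' d k ψ x) + q x * ψ x = -q x) := by
  classical
  set Lc : EuclideanSpace ℝ (Fin d) →L[ℝ] ℂ :=
    ∑ k, ((1 / 2 : ℂ) * ξ k) • (Complex.ofRealCLM.comp (EuclideanSpace.proj k)) with hLcdef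
  have hLc_apply : ∀ y : EuclideanSpace ℝ (Fin d),
      Lc y = (1 / 2 : ℂ) * ∑ k, ξ k * (y k : ℂ) := by
    intro y
    simp only [hLcdef, ContinuousLinearMap.coe_sum', Finset.sum_apply,
      ContinuousLinearMap.smul_apply, ContinuousLinearMap.comp_apply,
      euclid_proj_apply, Complex.ofRealCLM_apply, smul_eq_mul, Finset.mul_sum]
    congr 1 with k
    ring
  have hLc_single : ∀ k : Fin d,
      Lc (EuclideanSpace.single k (1 : ℝ)) = (1 / 2 : ℂ) * ξ k := by
    intro k
    simp only [hLcdef, ContinuousLinearMap.coe_sum', Finset.sum_apply,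
      ContinuousLinearMap.smul_apply, ContinuousLinearMap.comp_apply,
      euclid_proj_apply, Complex.ofRealCLM_apply, smul_eq_mul,
      EuclideanSpace.single_apply]
    rw [Finset.sum_eq_single k]
    · simp
    · intro j _ hj; simp [hj]
    · simp
  set E : EuclideanSpace ℝ (Fin d) → ℂ := fun y => Complex.exp (Lc y) with hEdef
  have hE : ∀ y, HasFDerivAt E (E y • Lc) y := fun y => Lc.hasFDerivAt.cexp
  have hEne : ∀ y, E y ≠ 0 := fun y => Complex.exp_ne_zero _
  have hu' : ∀ y, u y = E y * (1 + ψ y) := by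
    intro y; simp only [hEdef]; rw [hu y, ← hLc_apply y]
  have hufun : u = fun y => E y * (1 + ψ y) := funext hu'
  have hψ1 : ∀ y ∈ U, DifferentiableAt ℝ ψ y := fun y hy =>
    (hψ.differentiableOn two_ne_zero).differentiableAt (hU.mem_nhds hy)
  have hF : ContDiffOn ℝ 1 (fderiv ℝ ψ) U := hψ.fderiv_of_isOpen hU (by norm_num)
  have hF1 : ∀ y ∈ U, DifferentiableAt ℝ (fun z => fderiv ℝ ψ z) y := fun y hy =>
    (hF.differentiableOn one_ne_zero).differentiableAt (hU.mem_nhds hy)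
  have hPk : ∀ (k : Fin d), ∀ y ∈ U,
      DifferentiableAt ℝ (fun z => partialDeriv' d k ψ z) y := by
    intro k y hy
    exact (hF1 y hy).clm_apply (differentiableAt_const _)
  -- first derivatives of u on U
  have hstep1 : ∀ (k : Fin d), ∀ y ∈ U, partialDeriv' d k u y
      = E y * (partialDeriv' d k ψ y + (1 + ψ y) * ((1 / 2 : ℂ) * ξ k)) := by
    intro k y hy
    have h1 : HasFDerivAt (fun z => 1 + ψ z) (fderiv ℝ ψ y) y :=
      ((hψ1 y hy).hasFDerivAt).const_add 1
    have hmul : HasFDerivAt u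
        (E y • fderiv ℝ ψ y + (1 + ψ y) • (E y • Lc)) y := by
      rw [hufun]; exact (hE y).mul h1
    rw [partialDeriv', hmul.fderiv]
    simp only [ContinuousLinearMap.add_apply, ContinuousLinearMap.smul_apply,
      smul_eq_mul, hLc_single k, partialDeriv']
    ring
  -- second derivatives of u on U
  have hstep2 : ∀ (k : Fin d), ∀ x ∈ U,
      partialDeriv' d k (fun y => partialDeriv' d k u y) x
      = E x * (partialDeriv' d k (fun y => partialDeriv' d k ψ y) x
          + ξ k * partialDeriv' d k ψ x
          + (1 + ψ x) * (((1 / 2 : ℂ) * ξ k) * ((1 / 2 : ℂ) * ξ k))) := by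
    intro k x hx
    have heq : (fun y => partialDeriv' d k u y)
        =ᶠ[nhds x] (fun y => E y * (partialDeriv' d k ψ y
            + (1 + ψ y) * ((1 / 2 : ℂ) * ξ k))) := by
      filter_upwards [hU.mem_nhds hx] with y hy using hstep1 k y hy
    have hDk : DifferentiableAt ℝ (fun z => partialDeriv' d k ψ z) x := hPk k x hx
    have hhk : HasFDerivAt
        (fun y => partialDeriv' d k ψ y + (1 + ψ y) * ((1 / 2 : ℂ) * ξ k))
        (fderiv ℝ (fun z => partialDeriv' d k ψ z) x
          + ((1 / 2 : ℂ) * ξ k) • fderiv ℝ ψ x) x :=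
      hDk.hasFDerivAt.add ((((hψ1 x hx).hasFDerivAt).const_add 1).mul_const _)
    have hg : HasFDerivAt (fun y => E y * (partialDeriv' d k ψ y + (1 + ψ y) * ((1 / 2 : ℂ) * ξ k))) _ x :=
      (hE x).mul hhk
    rw [partialDeriv', heq.fderiv_eq, hg.fderiv]
    simp only [ContinuousLinearMap.add_apply, ContinuousLinearMap.smul_apply,
      smul_eq_mul, hLc_single k, partialDeriv']
    ring
  -- Laplacian of u on U
  have hlap : ∀ x ∈ U, laplacian' d u x
      = E x * (laplacian' d ψ x + ∑ k, ξ k * partialDeriv' d k ψ x) := by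
    intro x hx
    rw [laplacian', Finset.sum_congr rfl (fun k _ => hstep2 k x hx)]
    rw [← Finset.mul_sum]
    congr 1
    rw [Finset.sum_add_distrib, Finset.sum_add_distrib, ← Finset.mul_sum]
    have hz : ∑ k, ((1 / 2 : ℂ) * ξ k) * ((1 / 2 : ℂ) * ξ k) = 0 := by
      have : ∑ k, ((1 / 2 : ℂ) * ξ k) * ((1 / 2 : ℂ) * ξ k)
          = (1 / 4 : ℂ) * ∑ k, ξ k * ξ k := by
        rw [Finset.mul_sum]; congr 1 with k; ring
      rw [this, hξ, mul_zero]
    rw [hz, mul_zero, add_zero, laplacian']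
  constructor
  · intro h x hx
    have h0 := h x hx
    rw [hlap x hx, hu' x] at h0
    have h2 : E x * (laplacian' d ψ x + (∑ k, ξ k * partialDeriv' d k ψ x)
        + q x * (1 + ψ x)) = 0 := by linear_combination h0
    have h3 := (mul_eq_zero.mp h2).resolve_left (hEne x)
    linear_combination h3
  · intro h x hx
    have h0 := h x hx
    rw [hlap x hx, hu' x]
    linear_combination E x * h0
end

section
/- Let β > 0, C > 0, A ≥ 1 and 0 < ε < 1. Suppose X ≥ 0 is a real number such that X² ≤ A ( R^{−β} + e^{C R} ε² ) for all R > 0. Then X² ≤ 2A ( (C + β/e) / (−2 log ε) )^{β}; in particular there is a constant C' > 0 depending only on A, C and β such that X ≤ C' (−log ε)^{−β/2}. -/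
open Real

lemma log_le_div_exp_one {t : ℝ} (ht : 0 < t) : Real.log t ≤ t / Real.exp 1 := by
  have h := Real.log_le_sub_one_of_pos (show (0:ℝ) < t / Real.exp 1 by positivity)
  rw [Real.log_div ht.ne' (Real.exp_ne_zero 1), Real.log_exp] at h
  linarith

/-- Optimization lemma: if `X² ≤ A(R^{−β} + e^{CR} ε²)` for all `R > 0`, then
`X² ≤ 2A((C + β/e)/(−2 log ε))^β`; in particular `X ≤ C' (−log ε)^{−β/2}` with
`C'` depending only on `A`, `C` and `β`. -/
theorem log_stability_optimization (β C A : ℝ) (hβ : 0 < β) (hC : 0 < C) (hA : 1 ≤ A) :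
    (∀ ε X : ℝ, 0 < ε → ε < 1 → 0 ≤ X →
      (∀ R : ℝ, 0 < R → X ^ 2 ≤ A * (R ^ (-β) + Real.exp (C * R) * ε ^ 2)) →
      X ^ 2 ≤ 2 * A * ((C + β / Real.exp 1) / (-2 * Real.log ε)) ^ β) ∧
    ∃ C' > 0, ∀ ε X : ℝ, 0 < ε → ε < 1 → 0 ≤ X →
      (∀ R : ℝ, 0 < R → X ^ 2 ≤ A * (R ^ (-β) + Real.exp (C * R) * ε ^ 2)) →
      X ≤ C' * (-Real.log ε) ^ (-β / 2) := by
  have hKpos : 0 < C + β / Real.exp 1 := by positivity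
  have key : ∀ ε X : ℝ, 0 < ε → ε < 1 → 0 ≤ X →
      (∀ R : ℝ, 0 < R → X ^ 2 ≤ A * (R ^ (-β) + Real.exp (C * R) * ε ^ 2)) →
      X ^ 2 ≤ 2 * A * ((C + β / Real.exp 1) / (-2 * Real.log ε)) ^ β := by
    intro ε X hε hε1 hX h
    have hlog : Real.log ε < 0 := Real.log_neg hε hε1
    set K := C + β / Real.exp 1 with hKdef
    set L : ℝ := -2 * Real.log ε with hLdef
    have hLpos : 0 < L := by rw [hLdef]; linarith
    set t : ℝ := L / K with htdef
    have ht : 0 < t := div_pos hLpos hKpos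
    have hbound := h t ht
    have h1 : t ^ (-β) = (K / L) ^ β := by
      rw [Real.rpow_neg ht.le, ← Real.inv_rpow ht.le, htdef, inv_div]
    have h2 : Real.exp (C * t) * ε ^ 2 ≤ (K / L) ^ β := by
      have hε2 : ε ^ 2 = Real.exp (2 * Real.log ε) := by
        rw [two_mul, Real.exp_add, Real.exp_log hε]; ring
      rw [hε2, ← Real.exp_add, Real.rpow_def_of_pos (div_pos hKpos hLpos)]
      apply Real.exp_le_exp.mpr
      have hlt : Real.log t ≤ t / Real.exp 1 := log_le_div_exp_one ht
      have hKL : Real.log (K / L) = - Real.log t := by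
        rw [htdef, Real.log_div hLpos.ne' hKpos.ne', Real.log_div hKpos.ne' hLpos.ne']
        ring
      rw [hKL]
      have hLt : L = K * t := by
        rw [htdef]; field_simp
      have hCt : C * t + 2 * Real.log ε = -(β / Real.exp 1) * t := by
        have hL2 : 2 * Real.log ε = -L := by rw [hLdef]; ring
        rw [hL2, hLt, hKdef]; ring
      rw [hCt]
      have hβt : β * Real.log t ≤ β * (t / Real.exp 1) :=
        mul_le_mul_of_nonneg_left hlt hβ.le
      calc -(β / Real.exp 1) * t = -(β * (t / Real.exp 1)) := by ring
        _ ≤ -(β * Real.log t) := by linarith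
        _ = -Real.log t * β := by ring
    calc X ^ 2 ≤ A * (t ^ (-β) + Real.exp (C * t) * ε ^ 2) := hbound
      _ ≤ A * ((K/L) ^ β + (K/L) ^ β) := by
          apply mul_le_mul_of_nonneg_left _ (by linarith)
          rw [h1]; linarith
      _ = 2 * A * (K / L) ^ β := by ring
  refine ⟨key, Real.sqrt (2*A) * ((C + β / Real.exp 1)/2) ^ (β/2), by positivity, ?_⟩
  intro ε X hε hε1 hX h
  have hX2 := key ε X hε hε1 hX h
  have hlog : Real.log ε < 0 := Real.log_neg hε hε1
  have hl : 0 < -Real.log ε := by linarith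
  set K := C + β / Real.exp 1 with hKdef
  set M : ℝ := -Real.log ε with hMdef
  set RHS : ℝ := Real.sqrt (2*A) * (K/2) ^ (β/2) * M ^ (-β / 2) with hRHSdef
  have hRHSpos : 0 < RHS := by
    rw [hRHSdef]
    have : (0:ℝ) < 2 * A := by linarith
    positivity
  have hsq : RHS ^ 2 = 2 * A * (K / (-2 * Real.log ε)) ^ β := by
    rw [hRHSdef]
    have e1 : Real.sqrt (2*A) ^ 2 = 2 * A := Real.sq_sqrt (by linarith)
    have e2 : ((K/2) ^ (β/2)) ^ 2 = (K/2) ^ β := by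
      rw [← Real.rpow_natCast ((K/2) ^ (β/2)) 2, ← Real.rpow_mul (by positivity)]
      norm_num
    have e3 : (M ^ (-β/2)) ^ 2 = M ^ (-β) := by
      rw [← Real.rpow_natCast (M ^ (-β/2)) 2, ← Real.rpow_mul hl.le]
      norm_num
    have e4 : (K / (-2 * Real.log ε)) ^ β = (K/2) ^ β * M ^ (-β) := by
      have : K / (-2 * Real.log ε) = (K/2) * M⁻¹ := by
        rw [hMdef]; field_simp
      rw [this, Real.mul_rpow (by positivity) (by positivity),
        ← Real.rpow_neg_one M, ← Real.rpow_mul hl.le]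
      norm_num
    rw [e4]
    calc (Real.sqrt (2*A) * (K/2) ^ (β/2) * M ^ (-β / 2)) ^ 2
        = Real.sqrt (2*A) ^ 2 * ((K/2) ^ (β/2)) ^ 2 * (M ^ (-β/2)) ^ 2 := by ring
      _ = 2 * A * ((K/2) ^ β * M ^ (-β)) := by rw [e1, e2, e3]; ring
  calc X = Real.sqrt (X ^ 2) := (Real.sqrt_sq hX).symm
    _ ≤ Real.sqrt (RHS ^ 2) := Real.sqrt_le_sqrt (by rw [hsq]; exact hX2)
    _ = RHS := Real.sqrt_sq hRHSpos.le
end
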